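/- Let m be an order function on ℝ^d, let N be a tempered positive Radon measure on ℝ^d, and let ρ be a nonnegative Schwartz-class function on ℝ^d with ∫_{ℝ^d} ρ(x) dx = 1 and ρ(0) > 0, such that N*ρ(x) ≤ m(x) for all x ∈ ℝ^d. Then there exists a constant C > 0, depending only on d, m and ρ (and in particular not on Ω), such that for every Borel set Ω ⊆ ℝ^d with N(Ω) < ∞ one has |N(Ω) − ∫_Ω N*ρ(x) dx| ≤ C ∫_{∂Ω^{[−1,1]}} m(x) dx. -/

import Mathlib

open MeasureTheory Metric Set
open scoped ENNReal NNReal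

noncomputable section

/-- An order function on a normed space: positive, with polynomially controlled variation. -/
def IsOrderFunction {E : Type*} [NormedAddCommGroup E] (m : E → ℝ) : Prop :=
  (∀ x, 0 < m x) ∧ ∃ C ν : ℝ, 0 < C ∧ 0 ≤ ν ∧
    ∀ x y, m x ≤ C * (1 + ‖x - y‖) ^ ν * m y

/-- A tempered measure: `∫ (1+|y|)^{-k} dN(y) < ∞` for some `k ≥ 0`. -/
def IsTempered {d : ℕ} (N : Measure (EuclideanSpace ℝ (Fin d))) : Prop :=
  ∃ k : ℝ, 0 ≤ k ∧ ∫⁻ y, ENNReal.ofReal ((1 + ‖y‖) ^ (-k)) ∂N < ⊤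

/-- The convolution `N * ρ (x) = ∫ ρ(x - y) dN(y)`. -/
def mconv {d : ℕ} (N : Measure (EuclideanSpace ℝ (Fin d)))
    (ρ : EuclideanSpace ℝ (Fin d) → ℝ) (x : EuclideanSpace ℝ (Fin d)) : ℝ :=
  ∫ y, ρ (x - y) ∂N

/-- `∂Ω^{[a,b]}` for `0 ≤ a ≤ b`: points of `closure Ωᶜ` at distance in `[a,b]` from `Ω`. -/
def outerThick {d : ℕ} (Ω : Set (EuclideanSpace ℝ (Fin d))) (a b : ℝ) :
    Set (EuclideanSpace ℝ (Fin d)) :=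
  {x | x ∈ closure Ωᶜ ∧ a ≤ infDist x Ω ∧ infDist x Ω ≤ b}

/-- `∂Ω^{[-b,-a]}` for `0 ≤ a ≤ b`: points of `closure Ω` at distance in `[a,b]` from `Ωᶜ`. -/
def innerThick {d : ℕ} (Ω : Set (EuclideanSpace ℝ (Fin d))) (a b : ℝ) :
    Set (EuclideanSpace ℝ (Fin d)) :=
  {x | x ∈ closure Ω ∧ a ≤ infDist x Ωᶜ ∧ infDist x Ωᶜ ≤ b}

/-- `∂Ω^{[-1,1]}`, the unit thickening of the boundary of `Ω`. -/
def unitThick {d : ℕ} (Ω : Set (EuclideanSpace ℝ (Fin d))) :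
    Set (EuclideanSpace ℝ (Fin d)) :=
  innerThick Ω 0 1 ∪ outerThick Ω 0 1

/-- Decay bound for a Schwartz function, with arbitrary real exponent. -/
private lemma tb_schwartz_bound {E : Type*} [NormedAddCommGroup E] [NormedSpace ℝ E]
    (ρ : SchwartzMap E ℝ) (s : ℝ) :
    ∃ B : ℝ, 0 < B ∧ ∀ z, |ρ z| * (1 + ‖z‖) ^ s ≤ B := by
  set n : ℕ := ⌈s⌉₊ with hn
  have hs : s ≤ (n : ℝ) := Nat.le_ceil s
  refine ⟨max (2 ^ n * ((Finset.Iic ((n : ℕ), (0:ℕ))).sup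
      (fun m => SchwartzMap.seminorm ℝ m.1 m.2)) ρ) 1,
    lt_of_lt_of_le one_pos (le_max_right _ _), ?_⟩
  intro z
  have h1z : (1:ℝ) ≤ 1 + ‖z‖ := le_add_of_nonneg_right (norm_nonneg z)
  have h := SchwartzMap.one_add_le_sup_seminorm_apply (𝕜 := ℝ) (m := (n, 0))
      le_rfl le_rfl ρ z
  rw [norm_iteratedFDeriv_zero] at h
  have h2 : (1 + ‖z‖) ^ s ≤ (1 + ‖z‖) ^ (n : ℝ) :=
    Real.rpow_le_rpow_of_exponent_le h1z hs
  have h3 : (1 + ‖z‖) ^ (n:ℝ) = (1 + ‖z‖) ^ (n:ℕ) := Real.rpow_natCast _ _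
  calc |ρ z| * (1 + ‖z‖) ^ s ≤ |ρ z| * (1 + ‖z‖) ^ (n:ℝ) := by
        gcongr
    _ = (1 + ‖z‖) ^ (n:ℕ) * ‖ρ z‖ := by rw [h3, Real.norm_eq_abs]; ring
    _ ≤ _ := le_max_of_le_left h

/-- `p ^ (-k) ≤ D ^ k * q ^ (-k)` whenever `q ≤ D * p`. -/
private lemma tb_rpow_inv {p q D k : ℝ} (hp : 0 < p) (hq : 0 < q) (hD : 0 < D)
    (hk : 0 ≤ k) (h : q ≤ D * p) : p ^ (-k) ≤ D ^ k * q ^ (-k) := by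
  have hpk : (0:ℝ) < p ^ k := Real.rpow_pos_of_pos hp k
  have hqk : (0:ℝ) < q ^ k := Real.rpow_pos_of_pos hq k
  have h2 : q ^ k ≤ D ^ k * p ^ k := by
    rw [← Real.mul_rpow hD.le hp.le]
    exact Real.rpow_le_rpow hq.le h hk
  rw [Real.rpow_neg hp.le, Real.rpow_neg hq.le]
  have key : (p ^ k)⁻¹ * q ^ k ≤ D ^ k := by
    calc (p ^ k)⁻¹ * q ^ k ≤ (p ^ k)⁻¹ * (D ^ k * p ^ k) := by gcongr
      _ = D ^ k := by field_simp
  calc (p ^ k)⁻¹ = ((p ^ k)⁻¹ * q ^ k) * (q ^ k)⁻¹ := by field_simp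
    _ ≤ D ^ k * (q ^ k)⁻¹ := by gcongr

/-- From `|a| * b ≤ B` with `b > 0`, conclude `a ≤ B * b⁻¹`. -/
private lemma tb_decay {a b B : ℝ} (h : |a| * b ≤ B) (hb : 0 < b) : a ≤ B * b⁻¹ := by
  rw [← div_eq_mul_inv, le_div_iff₀ hb]
  exact le_trans (mul_le_mul_of_nonneg_right (le_abs_self a) hb.le) h

set_option maxHeartbeats 3200000 in
theorem tauberian_main {d : ℕ} (m : EuclideanSpace ℝ (Fin d) → ℝ)
    (hm : IsOrderFunction m)
    (N : Measure (EuclideanSpace ℝ (Fin d))) [IsLocallyFiniteMeasure N]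
    (hN : IsTempered N)
    (ρ : SchwartzMap (EuclideanSpace ℝ (Fin d)) ℝ)
    (hρpos : ∀ x, 0 ≤ ρ x) (hρint : ∫ x, ρ x = 1) (hρ0 : 0 < ρ 0)
    (hbound : ∀ x, mconv N (fun z => ρ z) x ≤ m x) :
    ∃ C : ℝ, 0 < C ∧ ∀ Ω : Set (EuclideanSpace ℝ (Fin d)),
      MeasurableSet Ω → N Ω < ⊤ →
      ENNReal.ofReal |(N Ω).toReal - ∫ x in Ω, mconv N (fun z => ρ z) x| ≤
        ENNReal.ofReal C * ∫⁻ x in unitThick Ω, ENNReal.ofReal (m x) := by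
  classical
  obtain ⟨hmpos, C₀, ν, hC₀, hν, horder⟩ := hm
  obtain ⟨kN, hkN0, hTN⟩ := hN
  set dd : ℝ := (d : ℝ) + 1 with hdd
  have hdd0 : (0:ℝ) < dd := by positivity
  set M' : ℝ := ν + dd with hM'
  have hM'0 : (0:ℝ) ≤ M' := by positivity
  -- Schwartz decay bounds
  obtain ⟨B₀, hB₀pos, hB₀⟩ := tb_schwartz_bound ρ (M' + dd)
  obtain ⟨B₁, hB₁pos, hB₁⟩ := tb_schwartz_bound ρ kN
  -- small ball lower bound for ρ near 0
  obtain ⟨r, hr0, hr1, hrρ⟩ : ∃ r : ℝ, 0 < r ∧ r ≤ 1 ∧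
      ∀ z : EuclideanSpace ℝ (Fin d), ‖z‖ ≤ r → ρ 0 / 2 ≤ ρ z := by
    obtain ⟨δ, hδ0, hδ⟩ := Metric.continuous_iff.mp ρ.continuous 0 (ρ 0 / 2) (by linarith)
    refine ⟨min (δ/2) 1, by positivity, min_le_right _ _, fun z hz => ?_⟩
    have h1 : dist z 0 < δ := by
      rw [dist_zero_right]
      calc ‖z‖ ≤ min (δ/2) 1 := hz
        _ ≤ δ/2 := min_le_left _ _
        _ < δ := by linarith
    have h2 := hδ z h1
    rw [Real.dist_eq] at h2
    have h3 := abs_lt.mp h2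
    linarith [h3.1]
  set c' : ℝ := ρ 0 / 2 with hc'
  have hc'0 : (0:ℝ) < c' := by rw [hc']; linarith
  -- basic integrals
  set Kb : ℝ≥0∞ := ∫⁻ x : EuclideanSpace ℝ (Fin d), ENNReal.ofReal ((1 + ‖x‖) ^ (-dd))
    with hKb
  have hKbtop : Kb < ⊤ := by
    rw [hKb]
    apply finite_integral_one_add_norm
    rw [finrank_euclideanSpace_fin]
    rw [hdd]; norm_num
  set Vr : ℝ≥0∞ := volume (closedBall (0 : EuclideanSpace ℝ (Fin d)) r) with hVr
  have hVr0 : Vr ≠ 0 := (measure_closedBall_pos volume _ hr0).ne'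
  have hVrtop : Vr ≠ ⊤ := measure_closedBall_lt_top.ne
  set V₂ : ℝ≥0∞ := volume (closedBall (0 : EuclideanSpace ℝ (Fin d)) (1/2 : ℝ)) with hV₂
  have hV₂0 : V₂ ≠ 0 := (measure_closedBall_pos volume _ (by norm_num)).ne'
  have hV₂top : V₂ ≠ ⊤ := measure_closedBall_lt_top.ne
  -- measurable minorant of m
  obtain ⟨DS, hDSc, hDSd⟩ := TopologicalSpace.exists_countable_dense (EuclideanSpace ℝ (Fin d))
  haveI : Countable DS := hDSc.to_subtype
  set mlow : EuclideanSpace ℝ (Fin d) → ℝ≥0∞ := fun z =>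
    ⨆ q : DS, ENNReal.ofReal (m q / (C₀ * (1 + ‖(q : EuclideanSpace ℝ (Fin d)) - z‖) ^ ν))
    with hmlow
  have hmlow_meas : Measurable mlow := by
    apply Measurable.iSup
    intro q
    apply ENNReal.measurable_ofReal.comp
    apply Measurable.div measurable_const
    apply Measurable.mul measurable_const
    apply Continuous.measurable
    apply Continuous.rpow_const
    · exact (continuous_const.add ((continuous_const.sub continuous_id).norm))
    · intro x
      left
      have : (0:ℝ) < 1 + ‖(q : EuclideanSpace ℝ (Fin d)) - x‖ := by positivity
      exact this.ne'
  have hmlow_le : ∀ z, mlow z ≤ ENNReal.ofReal (m z) := by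
    intro z
    rw [hmlow]
    apply iSup_le
    intro q
    apply ENNReal.ofReal_le_ofReal
    rw [div_le_iff₀ (by positivity)]
    calc m (q : EuclideanSpace ℝ (Fin d))
        ≤ C₀ * (1 + ‖(q : EuclideanSpace ℝ (Fin d)) - z‖) ^ ν * m z := horder _ _
      _ = m z * (C₀ * (1 + ‖(q : EuclideanSpace ℝ (Fin d)) - z‖) ^ ν) := by ring
  have hmlow_ge : ∀ x z : EuclideanSpace ℝ (Fin d),
      ENNReal.ofReal (m x / (C₀^2 * 2^ν * (2 + ‖x - z‖) ^ ν)) ≤ mlow z := by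
    intro x z
    obtain ⟨q, hqD, hqx⟩ := hDSd.exists_dist_lt x one_pos
    have hxq : ‖x - q‖ < 1 := by rw [← dist_eq_norm]; exact hqx
    refine le_trans ?_ (le_iSup _ (⟨q, hqD⟩ : DS))
    apply ENNReal.ofReal_le_ofReal
    have hmq : m x / (C₀ * 2 ^ ν) ≤ m q := by
      rw [div_le_iff₀ (by positivity)]
      calc m x ≤ C₀ * (1 + ‖x - q‖) ^ ν * m q := horder x q
        _ ≤ C₀ * 2 ^ ν * m q := by
            have hr2 : (1 + ‖x - q‖ : ℝ) ^ ν ≤ (2:ℝ) ^ ν :=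
              Real.rpow_le_rpow (by positivity) (by linarith) hν
            exact mul_le_mul_of_nonneg_right
              (mul_le_mul_of_nonneg_left hr2 hC₀.le) (hmpos q).le
        _ = m q * (C₀ * 2 ^ ν) := by ring
    have hqz : (1 + ‖(q : EuclideanSpace ℝ (Fin d)) - z‖) ^ ν ≤ (2 + ‖x - z‖) ^ ν := by
      apply Real.rpow_le_rpow (by positivity) _ hν
      have : ‖(q : EuclideanSpace ℝ (Fin d)) - z‖ ≤ ‖q - x‖ + ‖x - z‖ := by
        calc ‖(q : EuclideanSpace ℝ (Fin d)) - z‖ = ‖(q - x) + (x - z)‖ := by abel_nf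
          _ ≤ ‖q - x‖ + ‖x - z‖ := norm_add_le _ _
      have h4 : ‖(q : EuclideanSpace ℝ (Fin d)) - x‖ < 1 := by
        rw [norm_sub_rev]; exact hxq
      linarith
    rw [div_le_div_iff₀ (by positivity) (by positivity)]
    calc m x * (C₀ * (1 + ‖(q : EuclideanSpace ℝ (Fin d)) - z‖) ^ ν)
        ≤ m x * (C₀ * (2 + ‖x - z‖) ^ ν) :=
          mul_le_mul_of_nonneg_left (mul_le_mul_of_nonneg_left hqz hC₀.le) (hmpos x).le
      _ ≤ (m q * (C₀ * 2 ^ ν)) * (C₀ * (2 + ‖x - z‖) ^ ν) :=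
          mul_le_mul_of_nonneg_right
            ((div_le_iff₀ (show (0:ℝ) < C₀ * 2 ^ ν by positivity)).mp hmq)
            (by positivity)
      _ = m q * (C₀ ^ 2 * 2 ^ ν * (2 + ‖x - z‖) ^ ν) := by ring
  -- the convolution as a lower integral
  set L : EuclideanSpace ℝ (Fin d) → ℝ≥0∞ := fun x =>
    ∫⁻ y, ENNReal.ofReal (ρ (x - y)) ∂N with hL
  have hρjm : Measurable (Function.uncurry fun x y : EuclideanSpace ℝ (Fin d) =>
      ENNReal.ofReal (ρ (x - y))) := by
    apply Continuous.measurable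
    apply ENNReal.continuous_ofReal.comp
    exact ρ.continuous.comp (continuous_fst.sub continuous_snd)
  have hLmeas : Measurable L := Measurable.lintegral_prod_right hρjm
  have hdecay₁ : ∀ z : EuclideanSpace ℝ (Fin d), ρ z ≤ B₁ * (1 + ‖z‖) ^ (-kN) := by
    intro z
    have h1z : (0:ℝ) < (1 + ‖z‖) ^ kN := Real.rpow_pos_of_pos (by positivity) _
    have := tb_decay (hB₁ z) h1z
    rwa [← Real.rpow_neg (by positivity)] at this
  have hdecay₀ : ∀ z : EuclideanSpace ℝ (Fin d), ρ z ≤ B₀ * (1 + ‖z‖) ^ (-(M' + dd)) := by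
    intro z
    have h1z : (0:ℝ) < (1 + ‖z‖) ^ (M' + dd) := Real.rpow_pos_of_pos (by positivity) _
    have := tb_decay (hB₀ z) h1z
    rwa [← Real.rpow_neg (by positivity)] at this
  have hLfin : ∀ x, L x < ⊤ := by
    intro x
    have hb : ∀ y : EuclideanSpace ℝ (Fin d), ENNReal.ofReal (ρ (x - y)) ≤
        ENNReal.ofReal (B₁ * (1 + ‖x‖) ^ kN) * ENNReal.ofReal ((1 + ‖y‖) ^ (-kN)) := by
      intro y
      rw [← ENNReal.ofReal_mul (by positivity)]
      apply ENNReal.ofReal_le_ofReal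
      have h2 : (1 + ‖x - y‖) ^ (-kN) ≤ (1 + ‖x‖) ^ kN * (1 + ‖y‖) ^ (-kN) := by
        apply tb_rpow_inv (by positivity) (by positivity) (by positivity) hkN0
        have : ‖y‖ ≤ ‖x‖ + ‖x - y‖ := by
          calc ‖y‖ = ‖x - (x - y)‖ := by congr 1; abel
            _ ≤ ‖x‖ + ‖x - y‖ := norm_sub_le _ _
        nlinarith [norm_nonneg x, norm_nonneg (x - y)]
      calc ρ (x - y) ≤ B₁ * (1 + ‖x - y‖) ^ (-kN) := hdecay₁ _
        _ ≤ B₁ * ((1 + ‖x‖) ^ kN * (1 + ‖y‖) ^ (-kN)) := by gcongr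
        _ = B₁ * (1 + ‖x‖) ^ kN * (1 + ‖y‖) ^ (-kN) := by ring
    calc L x ≤ ∫⁻ y, ENNReal.ofReal (B₁ * (1 + ‖x‖) ^ kN) *
          ENNReal.ofReal ((1 + ‖y‖) ^ (-kN)) ∂N := lintegral_mono hb
      _ = ENNReal.ofReal (B₁ * (1 + ‖x‖) ^ kN) *
          ∫⁻ y, ENNReal.ofReal ((1 + ‖y‖) ^ (-kN)) ∂N :=
            lintegral_const_mul' _ _ ENNReal.ofReal_ne_top
      _ < ⊤ := ENNReal.mul_lt_top ENNReal.ofReal_lt_top hTN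
  have hInt : ∀ x, Integrable (fun y => ρ (x - y)) N := by
    intro x
    constructor
    · exact (ρ.continuous.comp (continuous_const.sub continuous_id)).aestronglyMeasurable
    · rw [hasFiniteIntegral_iff_norm]
      have heq : (fun y => ENNReal.ofReal ‖ρ (x - y)‖) =
          fun y => ENNReal.ofReal (ρ (x - y)) := by
        funext y
        rw [Real.norm_eq_abs, abs_of_nonneg (hρpos _)]
      rw [heq]
      exact hLfin x
  have hmconv : ∀ x, mconv N (fun z => ρ z) x = (L x).toReal := by
    intro x
    rw [mconv]
    rw [integral_eq_lintegral_of_nonneg_ae (Filter.Eventually.of_forall (fun y => hρpos _))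
      (hInt x).aestronglyMeasurable]
  have hLle : ∀ x, L x ≤ ENNReal.ofReal (m x) := by
    intro x
    have h := hbound x
    rw [hmconv x] at h
    calc L x = ENNReal.ofReal ((L x).toReal) := (ENNReal.ofReal_toReal (hLfin x).ne).symm
      _ ≤ _ := ENNReal.ofReal_le_ofReal h
  have hballN : ∀ x, ENNReal.ofReal c' * N (closedBall x r) ≤ ENNReal.ofReal (m x) := by
    intro x
    refine le_trans ?_ (hLle x)
    calc ENNReal.ofReal c' * N (closedBall x r)
        = ∫⁻ _ in closedBall x r, ENNReal.ofReal c' ∂N := (setLIntegral_const _ _).symm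
      _ ≤ ∫⁻ y in closedBall x r, ENNReal.ofReal (ρ (x - y)) ∂N := by
          apply setLIntegral_mono' measurableSet_closedBall
          intro y hy
          apply ENNReal.ofReal_le_ofReal
          apply hrρ
          rw [← dist_eq_norm]
          rw [dist_comm]
          exact mem_closedBall.mp hy
      _ ≤ L x := lintegral_mono' Measure.restrict_le_self le_rfl
  -- translation invariance facts
  have htrans : ∀ y : EuclideanSpace ℝ (Fin d),
      (∫⁻ x, ENNReal.ofReal ((1 + ‖x - y‖) ^ (-dd))) = Kb := by
    intro y
    rw [hKb]
    exact lintegral_sub_right_eq_self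
      (fun z => ENNReal.ofReal ((1 + ‖z‖) ^ (-dd))) y
  have hone : ∀ y : EuclideanSpace ℝ (Fin d),
      (∫⁻ x, ENNReal.ofReal (ρ (x - y))) = 1 := by
    intro y
    have h1 : (∫⁻ x, ENNReal.ofReal (ρ (x - y))) = ∫⁻ z, ENNReal.ofReal (ρ z) :=
      lintegral_sub_right_eq_self (fun z => ENNReal.ofReal (ρ z)) y
    rw [h1, ← ofReal_integral_eq_lintegral_ofReal ρ.integrable
      (Filter.Eventually.of_forall hρpos), hρint, ENNReal.ofReal_one]
  -- the grand constants
  set c₁ : ℝ := C₀ ^ 2 * 2 ^ ν * (7/2 : ℝ) ^ ν with hc₁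
  have hc₁0 : (0:ℝ) < c₁ := by positivity
  set E₅ : ℝ≥0∞ := ENNReal.ofReal c₁ * ENNReal.ofReal ((3:ℝ) ^ dd) * Kb + V₂ with hE₅
  have hE₅top : E₅ ≠ ⊤ := by
    rw [hE₅]
    apply ENNReal.add_ne_top.mpr
    constructor
    · exact (ENNReal.mul_lt_top (ENNReal.mul_lt_top ENNReal.ofReal_lt_top
        ENNReal.ofReal_lt_top) hKbtop).ne
    · exact hV₂top
  set E₃ : ℝ≥0∞ := ENNReal.ofReal (2 ^ M') * (ENNReal.ofReal c')⁻¹ * (E₅ * V₂⁻¹) * Vr⁻¹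
    with hE₃
  have hE₃top : E₃ ≠ ⊤ := by
    rw [hE₃]
    apply ENNReal.mul_ne_top
    apply ENNReal.mul_ne_top
    apply ENNReal.mul_ne_top
    · exact ENNReal.ofReal_ne_top
    · exact ENNReal.inv_ne_top.mpr (by
        simp only [ne_eq, ENNReal.ofReal_eq_zero, not_le]; exact hc'0)
    · exact ENNReal.mul_ne_top hE₅top (ENNReal.inv_ne_top.mpr hV₂0)
    · exact ENNReal.inv_ne_top.mpr hVr0
  set EE : ℝ≥0∞ := ENNReal.ofReal B₀ * Kb * E₃ with hEE
  have hEEtop : EE ≠ ⊤ := by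
    rw [hEE]
    exact ENNReal.mul_ne_top (ENNReal.mul_ne_top ENNReal.ofReal_ne_top hKbtop.ne) hE₃top
  refine ⟨EE.toReal + 1, by positivity, ?_⟩
  have hCge : EE ≤ ENNReal.ofReal (EE.toReal + 1) := by
    conv_lhs => rw [← ENNReal.ofReal_toReal hEEtop]
    exact ENNReal.ofReal_le_ofReal (by linarith)
  have hC0 : ENNReal.ofReal (EE.toReal + 1) ≠ 0 := by
    simp only [ne_eq, ENNReal.ofReal_eq_zero, not_le]
    positivity
  intro Ω hΩ hNΩ
  -- the distance-to-the-other-side function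
  set t : EuclideanSpace ℝ (Fin d) → ℝ := fun y =>
    if y ∈ Ω then infDist y Ωᶜ else infDist y Ω with hT
  have ht0 : ∀ y, 0 ≤ t y := by
    intro y
    rw [hT]
    dsimp only
    split <;> exact infDist_nonneg
  have ht_meas : Measurable t := by
    rw [hT]
    exact Measurable.ite hΩ (continuous_infDist_pt _).measurable
      (continuous_infDist_pt _).measurable
  have ht_lip : ∀ x y : EuclideanSpace ℝ (Fin d), t x ≤ t y + dist x y := by
    intro x y
    rw [hT]
    dsimp only
    by_cases hx : x ∈ Ω <;> by_cases hy : y ∈ Ω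
    · rw [if_pos hx, if_pos hy]; exact infDist_le_infDist_add_dist
    · rw [if_pos hx, if_neg hy]
      have h1 : infDist x Ωᶜ ≤ dist x y := infDist_le_dist_of_mem hy
      have h2 : (0:ℝ) ≤ infDist y Ω := infDist_nonneg
      linarith
    · rw [if_neg hx, if_pos hy]
      have h1 : infDist x Ω ≤ dist x y := infDist_le_dist_of_mem hy
      have h2 : (0:ℝ) ≤ infDist y Ωᶜ := infDist_nonneg
      linarith
    · rw [if_neg hx, if_neg hy]; exact infDist_le_infDist_add_dist
  set Λ : EuclideanSpace ℝ (Fin d) → ℝ≥0∞ := fun y =>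
    ENNReal.ofReal ((1 + t y) ^ (-M')) with hΛ
  have hΛmeas : Measurable Λ := by
    rw [hΛ]; fun_prop
  set J : ℝ≥0∞ := ∫⁻ y, Λ y ∂N with hJ
  set U : ℝ≥0∞ := ∫⁻ x in unitThick Ω, ENNReal.ofReal (m x) with hU
  set g : EuclideanSpace ℝ (Fin d) → ℝ≥0∞ := fun y =>
    ∫⁻ x in Ω, ENNReal.ofReal (ρ (x - y)) with hg
  have hg_meas : Measurable g := by
    rw [hg]
    exact Measurable.lintegral_prod_right
      (f := fun y x => ENNReal.ofReal (ρ (x - y)))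
      (by
        apply Continuous.measurable
        apply ENNReal.continuous_ofReal.comp
        exact ρ.continuous.comp (continuous_snd.sub continuous_fst))
  set IΩ : ℝ≥0∞ := ∫⁻ x in Ω, L x with hIΩ
  have hswap : IΩ = ∫⁻ y, g y ∂N := by
    rw [hIΩ, hg, hL]
    exact lintegral_lintegral_swap (hρjm.aemeasurable)
  -- tail estimate
  have htail : ∀ y : EuclideanSpace ℝ (Fin d), ∀ A : Set (EuclideanSpace ℝ (Fin d)),
      MeasurableSet A → (∀ x ∈ A, t y ≤ ‖x - y‖) →
      (∫⁻ x in A, ENNReal.ofReal (ρ (x - y))) ≤ ENNReal.ofReal B₀ * Kb * Λ y := by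
    intro y A hAm hA
    have hptw : ∀ x ∈ A, ENNReal.ofReal (ρ (x - y)) ≤
        ENNReal.ofReal (B₀ * (1 + t y) ^ (-M')) *
          ENNReal.ofReal ((1 + ‖x - y‖) ^ (-dd)) := by
      intro x hx
      rw [← ENNReal.ofReal_mul
        (mul_nonneg hB₀pos.le (Real.rpow_nonneg (by linarith [ht0 y]) _))]
      apply ENNReal.ofReal_le_ofReal
      have h1 : ρ (x - y) ≤ B₀ * (1 + ‖x - y‖) ^ (-(M' + dd)) := hdecay₀ _
      have h2 : (1 + ‖x - y‖) ^ (-(M' + dd)) =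
          (1 + ‖x - y‖) ^ (-M') * (1 + ‖x - y‖) ^ (-dd) := by
        rw [← Real.rpow_add (by positivity)]
        ring_nf
      have h3 : (1 + ‖x - y‖) ^ (-M') ≤ (1 + t y) ^ (-M') := by
        apply Real.rpow_le_rpow_of_nonpos
          (by linarith [ht0 y] : (0:ℝ) < 1 + t y) _ (by linarith : -M' ≤ 0)
        have := hA x hx
        linarith
      calc ρ (x - y) ≤ B₀ * ((1 + ‖x - y‖) ^ (-M') * (1 + ‖x - y‖) ^ (-dd)) := by
            rw [← h2]; exact h1
        _ ≤ B₀ * ((1 + t y) ^ (-M') * (1 + ‖x - y‖) ^ (-dd)) :=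
            mul_le_mul_of_nonneg_left
              (mul_le_mul_of_nonneg_right h3 (Real.rpow_nonneg (by positivity) _))
              hB₀pos.le
        _ = B₀ * (1 + t y) ^ (-M') * ((1 + ‖x - y‖) ^ (-dd)) := by ring
    calc (∫⁻ x in A, ENNReal.ofReal (ρ (x - y)))
        ≤ ∫⁻ x in A, ENNReal.ofReal (B₀ * (1 + t y) ^ (-M')) *
            ENNReal.ofReal ((1 + ‖x - y‖) ^ (-dd)) := by
          exact setLIntegral_mono' hAm hptw
      _ ≤ ∫⁻ x, ENNReal.ofReal (B₀ * (1 + t y) ^ (-M')) *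
            ENNReal.ofReal ((1 + ‖x - y‖) ^ (-dd)) :=
          lintegral_mono' Measure.restrict_le_self le_rfl
      _ = ENNReal.ofReal (B₀ * (1 + t y) ^ (-M')) * Kb := by
          rw [lintegral_const_mul' _ _ ENNReal.ofReal_ne_top, htrans y]
      _ = ENNReal.ofReal B₀ * Kb * Λ y := by
          rw [ENNReal.ofReal_mul hB₀pos.le, hΛ]
          ring
  set Φc : ℝ≥0∞ := ENNReal.ofReal B₀ * Kb with hΦc
  have hΦc_top : Φc ≠ ⊤ := ENNReal.mul_ne_top ENNReal.ofReal_ne_top hKbtop.ne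
  have hK5 : N Ω ≤ IΩ + Φc * J := by
    have h1 : ∀ y ∈ Ω, (1:ℝ≥0∞) ≤ g y + Φc * Λ y := by
      intro y hy
      have hgy : g y = ∫⁻ x in Ω, ENNReal.ofReal (ρ (x - y)) := by rw [hg]
      have hty : ∀ x ∈ Ωᶜ, t y ≤ ‖x - y‖ := by
        intro x hx
        have h2 : t y = infDist y Ωᶜ := by rw [hT]; exact if_pos hy
        rw [h2]
        calc infDist y Ωᶜ ≤ dist y x := infDist_le_dist_of_mem hx
          _ = ‖x - y‖ := by rw [dist_comm, dist_eq_norm]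
      have hsplit := lintegral_add_compl (μ := volume)
        (fun x => ENNReal.ofReal (ρ (x - y))) hΩ
      have hQle := htail y Ωᶜ hΩ.compl hty
      calc (1:ℝ≥0∞) = ∫⁻ x, ENNReal.ofReal (ρ (x - y)) := (hone y).symm
        _ = g y + ∫⁻ x in Ωᶜ, ENNReal.ofReal (ρ (x - y)) := by
            rw [hgy]; exact hsplit.symm
        _ ≤ g y + Φc * Λ y := add_le_add_right hQle _
    calc N Ω = ∫⁻ _ in Ω, 1 ∂N := (setLIntegral_one _).symm
      _ ≤ ∫⁻ y in Ω, (g y + Φc * Λ y) ∂N := setLIntegral_mono' hΩ h1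
      _ ≤ ∫⁻ y, (g y + Φc * Λ y) ∂N := lintegral_mono' Measure.restrict_le_self le_rfl
      _ = (∫⁻ y, g y ∂N) + Φc * J := by
          rw [lintegral_add_left hg_meas, lintegral_const_mul' _ _ hΦc_top, hJ]
      _ = IΩ + Φc * J := by rw [hswap]
  have hgle1 : ∀ y ∈ Ω, g y ≤ 1 := by
    intro y _
    have hgy : g y = ∫⁻ x in Ω, ENNReal.ofReal (ρ (x - y)) := by rw [hg]
    rw [hgy, ← hone y]
    exact lintegral_mono' Measure.restrict_le_self le_rfl
  have hgle2 : ∀ y ∈ Ωᶜ, g y ≤ Φc * Λ y := by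
    intro y hy
    have hgy : g y = ∫⁻ x in Ω, ENNReal.ofReal (ρ (x - y)) := by rw [hg]
    rw [hgy]
    apply htail y Ω hΩ
    intro x hx
    have h2 : t y = infDist y Ω := by rw [hT]; exact if_neg hy
    rw [h2]
    calc infDist y Ω ≤ dist y x := infDist_le_dist_of_mem hx
      _ = ‖x - y‖ := by rw [dist_comm, dist_eq_norm]
  have hK6 : IΩ ≤ N Ω + Φc * J := by
    calc IΩ = ∫⁻ y, g y ∂N := hswap
      _ = (∫⁻ y in Ω, g y ∂N) + ∫⁻ y in Ωᶜ, g y ∂N := (lintegral_add_compl _ hΩ).symm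
      _ ≤ (∫⁻ _ in Ω, 1 ∂N) + ∫⁻ y in Ωᶜ, Φc * Λ y ∂N :=
          add_le_add (setLIntegral_mono' hΩ hgle1) (setLIntegral_mono' hΩ.compl hgle2)
      _ ≤ N Ω + Φc * J := by
          rw [setLIntegral_one]
          apply add_le_add_right
          calc (∫⁻ y in Ωᶜ, Φc * Λ y ∂N) ≤ ∫⁻ y, Φc * Λ y ∂N :=
              lintegral_mono' Measure.restrict_le_self le_rfl
            _ = Φc * J := by rw [lintegral_const_mul' _ _ hΦc_top, hJ]
  -- the unit thickening is a closed set
  have huT_closed : IsClosed (unitThick Ω) := by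
    apply IsClosed.union
    · have h1 : innerThick Ω 0 1 =
          closure Ω ∩ ((fun x => infDist x Ωᶜ) ⁻¹' Icc 0 1) := by
        ext x
        simp only [innerThick, mem_setOf_eq, mem_inter_iff, mem_preimage, mem_Icc]
      rw [h1]
      exact isClosed_closure.inter (isClosed_Icc.preimage (continuous_infDist_pt _))
    · have h1 : outerThick Ω 0 1 =
          closure Ωᶜ ∩ ((fun x => infDist x Ω) ⁻¹' Icc 0 1) := by
        ext x
        simp only [outerThick, mem_setOf_eq, mem_inter_iff, mem_preimage, mem_Icc]
      rw [h1]
      exact isClosed_closure.inter (isClosed_Icc.preimage (continuous_infDist_pt _))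
  have huT_meas : MeasurableSet (unitThick Ω) := huT_closed.measurableSet
  -- Fubini step 1
  set W : ℝ≥0∞ := ∫⁻ x, Λ x * ENNReal.ofReal (m x) with hW
  have hofc'ne : (ENNReal.ofReal c') ≠ 0 := by
    simp only [ne_eq, ENNReal.ofReal_eq_zero, not_le]
    exact hc'0
  have hJW : J * Vr ≤ ENNReal.ofReal (2 ^ M') * ((ENNReal.ofReal c')⁻¹ * W) := by
    have hvol : ∀ y : EuclideanSpace ℝ (Fin d), volume (closedBall y r) = Vr := by
      intro y; rw [hVr]; exact Measure.addHaar_closedBall_center volume y r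
    set F : EuclideanSpace ℝ (Fin d) → EuclideanSpace ℝ (Fin d) → ℝ≥0∞ :=
      fun y x => if dist x y ≤ r then Λ y else 0 with hF
    have hFmeas : Measurable (Function.uncurry F) := by
      rw [hF]
      show Measurable fun p : EuclideanSpace ℝ (Fin d) × EuclideanSpace ℝ (Fin d) =>
        if dist p.2 p.1 ≤ r then Λ p.1 else 0
      apply Measurable.ite
      · exact measurableSet_le (measurable_dist.comp
          (measurable_snd.prodMk measurable_fst)) measurable_const
      · exact hΛmeas.comp measurable_fst
      · exact measurable_const
    have hFx : ∀ y, (∫⁻ x, F y x) = Λ y * Vr := by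
      intro y
      have h1 : F y = (closedBall y r).indicator (fun _ => Λ y) := by
        funext x
        rw [hF]
        simp only [Set.indicator_apply, mem_closedBall]
      rw [h1, lintegral_indicator measurableSet_closedBall, setLIntegral_const, hvol]
    have hstep1 : J * Vr = ∫⁻ y, (∫⁻ x, F y x) ∂N := by
      rw [hJ, ← lintegral_mul_const' Vr _ hVrtop]
      congr 1
      funext y
      exact (hFx y).symm
    have hswap1 : (∫⁻ y, (∫⁻ x, F y x) ∂N) = ∫⁻ x, (∫⁻ y, F y x ∂N) :=
      lintegral_lintegral_swap hFmeas.aemeasurable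
    have hinner : ∀ x, (∫⁻ y, F y x ∂N) ≤
        (ENNReal.ofReal (2 ^ M') * Λ x) * N (closedBall x r) := by
      intro x
      have hptw : ∀ y, F y x ≤ (closedBall x r).indicator
          (fun _ => ENNReal.ofReal (2 ^ M') * Λ x) y := by
        intro y
        rw [hF]
        dsimp only
        by_cases hd : dist x y ≤ r
        · rw [if_pos hd, Set.indicator_of_mem (by rw [mem_closedBall, dist_comm]; exact hd)]
          rw [hΛ]
          dsimp only
          rw [← ENNReal.ofReal_mul (by positivity)]
          apply ENNReal.ofReal_le_ofReal
          apply tb_rpow_inv (by linarith [ht0 y] : (0:ℝ) < 1 + t y)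
            (by linarith [ht0 x] : (0:ℝ) < 1 + t x) two_pos hM'0
          have h5 := ht_lip x y
          have h6 := ht0 y
          have h7 := dist_nonneg (x := x) (y := y)
          linarith
        · rw [if_neg hd]; exact zero_le
      calc (∫⁻ y, F y x ∂N) ≤ ∫⁻ y, (closedBall x r).indicator
            (fun _ => ENNReal.ofReal (2 ^ M') * Λ x) y ∂N := lintegral_mono hptw
        _ = (ENNReal.ofReal (2 ^ M') * Λ x) * N (closedBall x r) := by
            rw [lintegral_indicator measurableSet_closedBall, setLIntegral_const]
    have hNball : ∀ x, N (closedBall x r) ≤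
        ENNReal.ofReal (m x) * (ENNReal.ofReal c')⁻¹ := by
      intro x
      rw [← div_eq_mul_inv]
      rw [ENNReal.le_div_iff_mul_le (Or.inl hofc'ne) (Or.inl ENNReal.ofReal_ne_top)]
      rw [mul_comm]
      exact hballN x
    calc J * Vr = ∫⁻ y, (∫⁻ x, F y x) ∂N := hstep1
      _ = ∫⁻ x, (∫⁻ y, F y x ∂N) := hswap1
      _ ≤ ∫⁻ x, (ENNReal.ofReal (2 ^ M') * Λ x) *
            (ENNReal.ofReal (m x) * (ENNReal.ofReal c')⁻¹) := by
          apply lintegral_mono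
          intro x
          exact le_trans (hinner x) (mul_le_mul_right (hNball x) _)
      _ = ENNReal.ofReal (2 ^ M') * ((ENNReal.ofReal c')⁻¹ * W) := by
          rw [show (fun x => (ENNReal.ofReal (2 ^ M') * Λ x) *
              (ENNReal.ofReal (m x) * (ENNReal.ofReal c')⁻¹)) = fun x =>
              ENNReal.ofReal (2 ^ M') * ((ENNReal.ofReal c')⁻¹ *
                (Λ x * ENNReal.ofReal (m x))) from funext fun x => by ring]
          rw [lintegral_const_mul' _ _ ENNReal.ofReal_ne_top,
            lintegral_const_mul' _ _ (ENNReal.inv_ne_top.mpr hofc'ne), hW]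
  -- Step 2 : the Lebesgue-side estimate
  have hWU : W * V₂ ≤ E₅ * U := by
    by_cases hfr : frontier Ω = ∅
    · have hclopen := isClopen_iff.mp (isClopen_iff_frontier_eq_empty.mpr hfr)
      have htz : ∀ y, t y = 0 := by
        intro y
        rcases hclopen with h | h
        · have hy : y ∉ Ω := by rw [h]; exact notMem_empty y
          rw [hT]; dsimp only; rw [if_neg hy, h]; exact infDist_empty
        · have hy : y ∈ Ω := by rw [h]; exact mem_univ y
          rw [hT]; dsimp only; rw [if_pos hy, h, compl_univ]; exact infDist_empty
      have hUuniv : unitThick Ω = univ := by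
        rcases hclopen with h | h
        · apply eq_univ_of_forall
          intro x
          apply mem_union_right
          refine ⟨?_, infDist_nonneg, ?_⟩
          · rw [h, compl_empty]; exact subset_closure (mem_univ x)
          · rw [h, infDist_empty]; exact zero_le_one
        · apply eq_univ_of_forall
          intro x
          apply mem_union_left
          refine ⟨?_, infDist_nonneg, ?_⟩
          · rw [h]; exact subset_closure (mem_univ x)
          · rw [h, compl_univ, infDist_empty]; exact zero_le_one
      have hWeq : W = U := by
        rw [hW, hU, hUuniv, Measure.restrict_univ]
        congr 1
        funext x
        rw [hΛ]
        dsimp only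
        rw [htz x]
        norm_num
      rw [hWeq]
      calc U * V₂ = V₂ * U := mul_comm _ _
        _ ≤ E₅ * U := mul_le_mul_left (by rw [hE₅]; exact le_add_self) U
    · -- main case: the frontier is nonempty
      have hfrne : (frontier Ω).Nonempty := nonempty_iff_ne_empty.mpr hfr
      have hΩne : Ω.Nonempty := by
        by_contra h
        rw [not_nonempty_iff_eq_empty] at h
        apply hfr
        rw [h]
        exact frontier_empty
      have hΩcne : Ωᶜ.Nonempty := by
        by_contra h
        rw [not_nonempty_iff_eq_empty, compl_empty_iff] at h
        apply hfr
        rw [h]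
        exact frontier_univ
      have hseg : ∀ a b : EuclideanSpace ℝ (Fin d), a ∈ closure Ω → b ∈ closure Ωᶜ →
          ∃ w ∈ frontier Ω, dist a w ≤ dist a b ∧ dist b w ≤ dist a b := by
        intro a b ha hb
        have hconn : IsPreconnected (segment ℝ a b) := (convex_segment a b).isPreconnected
        have hsub : segment ℝ a b ⊆ closure Ω ∪ closure Ωᶜ := by
          intro p _
          by_cases hp : p ∈ Ω
          · exact Or.inl (subset_closure hp)
          · exact Or.inr (subset_closure hp)
        obtain ⟨w, hwseg, hw1, hw2⟩ := isPreconnected_closed_iff.mp hconn _ _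
          isClosed_closure isClosed_closure hsub
          ⟨a, left_mem_segment ℝ a b, ha⟩ ⟨b, right_mem_segment ℝ a b, hb⟩
        have hwf : w ∈ frontier Ω := by
          rw [frontier_eq_closure_inter_closure]
          exact ⟨hw1, hw2⟩
        have hsubball : segment ℝ a b ⊆ closedBall a (dist a b) :=
          (convex_closedBall a (dist a b)).segment_subset
            (mem_closedBall_self dist_nonneg)
            (by rw [mem_closedBall, dist_comm])
        have hsubball2 : segment ℝ a b ⊆ closedBall b (dist a b) :=
          (convex_closedBall b (dist a b)).segment_subset
            (mem_closedBall.mpr le_rfl)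
            (mem_closedBall_self dist_nonneg)
        refine ⟨w, hwf, ?_, ?_⟩
        · have h8 := hsubball hwseg
          rw [mem_closedBall] at h8
          rw [dist_comm]
          exact h8
        · have h8 := hsubball2 hwseg
          rw [mem_closedBall] at h8
          rw [dist_comm]
          exact h8
      have hbd : ∀ x : EuclideanSpace ℝ (Fin d), ∃ w ∈ frontier Ω,
          dist x w ≤ t x + 1 := by
        intro x
        by_cases hx : x ∈ Ω
        · have htx : t x = infDist x Ωᶜ := by rw [hT]; exact if_pos hx
          have h9 : infDist x Ωᶜ < t x + 1 := by rw [htx]; linarith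
          obtain ⟨z, hz, hdz⟩ := (infDist_lt_iff hΩcne).mp h9
          obtain ⟨w, hwf, hw1, _⟩ := hseg x z (subset_closure hx) (subset_closure hz)
          exact ⟨w, hwf, le_trans hw1 hdz.le⟩
        · have htx : t x = infDist x Ω := by rw [hT]; exact if_neg hx
          have h9 : infDist x Ω < t x + 1 := by rw [htx]; linarith
          obtain ⟨z, hz, hdz⟩ := (infDist_lt_iff hΩne).mp h9
          obtain ⟨w, hwf, _, hw2⟩ := hseg z x (subset_closure hz) (subset_closure hx)
          refine ⟨w, hwf, ?_⟩
          calc dist x w ≤ dist z x := hw2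
            _ = dist x z := dist_comm z x
            _ ≤ t x + 1 := hdz.le
      have hball_uT : ∀ w ∈ frontier Ω, closedBall w (1/2:ℝ) ⊆ unitThick Ω := by
        intro w hwf z hz
        have hw1 : w ∈ closure Ω := frontier_subset_closure hwf
        have hw2 : w ∈ closure Ωᶜ := by
          rw [← frontier_compl] at hwf
          exact frontier_subset_closure hwf
        have hdzw : dist z w ≤ 1/2 := mem_closedBall.mp hz
        by_cases hzc : z ∈ closure Ω
        · apply mem_union_left
          refine ⟨hzc, infDist_nonneg, ?_⟩
          have h0 : infDist w Ωᶜ = 0 := (mem_closure_iff_infDist_zero hΩcne).mp hw2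
          calc infDist z Ωᶜ ≤ infDist w Ωᶜ + dist z w := infDist_le_infDist_add_dist
            _ ≤ 0 + 1/2 := by rw [h0]; linarith
            _ ≤ 1 := by norm_num
        · apply mem_union_right
          have hzΩc : z ∈ closure Ωᶜ := subset_closure (fun hzo => hzc (subset_closure hzo))
          refine ⟨hzΩc, infDist_nonneg, ?_⟩
          have h0 : infDist w Ω = 0 := (mem_closure_iff_infDist_zero hΩne).mp hw1
          calc infDist z Ω ≤ infDist w Ω + dist z w := infDist_le_infDist_add_dist
            _ ≤ 0 + 1/2 := by rw [h0]; linarith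
            _ ≤ 1 := by norm_num
      -- the kernel of the second Fubini argument
      set H : EuclideanSpace ℝ (Fin d) → EuclideanSpace ℝ (Fin d) → ℝ≥0∞ :=
        fun x z => (if dist x z ≤ t x + 2 then (1:ℝ≥0∞) else 0) *
          (unitThick Ω).indicator mlow z with hH
      have hHmeas : Measurable (Function.uncurry H) := by
        rw [hH]
        show Measurable fun p : EuclideanSpace ℝ (Fin d) × EuclideanSpace ℝ (Fin d) =>
          (if dist p.1 p.2 ≤ t p.1 + 2 then (1:ℝ≥0∞) else 0) *
            (unitThick Ω).indicator mlow p.2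
        apply Measurable.mul
        · apply Measurable.ite _ measurable_const measurable_const
          exact measurableSet_le measurable_dist
            ((ht_meas.comp measurable_fst).add measurable_const)
        · exact (hmlow_meas.indicator huT_meas).comp measurable_snd
      have hptwx : ∀ x : EuclideanSpace ℝ (Fin d),
          Λ x * ENNReal.ofReal (m x) * V₂ ≤
          ENNReal.ofReal c₁ * (ENNReal.ofReal ((1 + t x) ^ (-dd)) * ∫⁻ z, H x z) := by
        intro x
        obtain ⟨w, hwf, hwd⟩ := hbd x
        have h1tx : (0:ℝ) < 1 + t x := by linarith [ht0 x]
        have hlow : ENNReal.ofReal (m x / (c₁ * (1 + t x) ^ ν)) * V₂ ≤ ∫⁻ z, H x z := by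
          have hsub : ∀ z ∈ closedBall w (1/2:ℝ),
              ENNReal.ofReal (m x / (c₁ * (1 + t x) ^ ν)) ≤ mlow z := by
            intro z hz
            refine le_trans ?_ (hmlow_ge x z)
            apply ENNReal.ofReal_le_ofReal
            have hdxz : ‖x - z‖ ≤ t x + 3/2 := by
              rw [← dist_eq_norm]
              have h10 := mem_closedBall.mp hz
              calc dist x z ≤ dist x w + dist w z := dist_triangle x w z
                _ ≤ (t x + 1) + 1/2 := by
                    apply add_le_add hwd
                    rw [dist_comm]
                    exact h10
                _ = t x + 3/2 := by ring
            have hden : C₀ ^ 2 * 2 ^ ν * (2 + ‖x - z‖) ^ ν ≤ c₁ * (1 + t x) ^ ν := by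
              rw [hc₁]
              have h11 : (2 + ‖x - z‖ : ℝ) ^ ν ≤ ((7/2) * (1 + t x)) ^ ν := by
                apply Real.rpow_le_rpow (by positivity) _ hν
                linarith [ht0 x]
              rw [Real.mul_rpow (by norm_num) h1tx.le] at h11
              calc C₀ ^ 2 * 2 ^ ν * (2 + ‖x - z‖) ^ ν
                  ≤ C₀ ^ 2 * 2 ^ ν * ((7/2:ℝ) ^ ν * (1 + t x) ^ ν) := by
                    apply mul_le_mul_of_nonneg_left h11 (by positivity)
                _ = C₀ ^ 2 * 2 ^ ν * (7/2:ℝ) ^ ν * (1 + t x) ^ ν := by ring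
            rw [div_le_div_iff₀ (by positivity) (by positivity)]
            exact mul_le_mul_of_nonneg_left hden (hmpos x).le
          calc ENNReal.ofReal (m x / (c₁ * (1 + t x) ^ ν)) * V₂
              = ∫⁻ _ in closedBall w (1/2:ℝ),
                  ENNReal.ofReal (m x / (c₁ * (1 + t x) ^ ν)) := by
                rw [setLIntegral_const, hV₂,
                  Measure.addHaar_closedBall_center volume w]
            _ ≤ ∫⁻ z in closedBall w (1/2:ℝ), mlow z :=
                setLIntegral_mono' measurableSet_closedBall hsub
            _ = ∫⁻ z, (closedBall w (1/2:ℝ)).indicator mlow z :=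
                (lintegral_indicator measurableSet_closedBall mlow).symm
            _ ≤ ∫⁻ z, H x z := by
                apply lintegral_mono
                intro z
                by_cases hz : z ∈ closedBall w (1/2:ℝ)
                · rw [Set.indicator_of_mem hz]
                  rw [hH]
                  dsimp only
                  have hz1 : dist x z ≤ t x + 2 := by
                    have h10 := mem_closedBall.mp hz
                    calc dist x z ≤ dist x w + dist w z := dist_triangle x w z
                      _ ≤ (t x + 1) + 1/2 := by
                          apply add_le_add hwd
                          rw [dist_comm]
                          exact h10
                      _ ≤ t x + 2 := by linarith
                  rw [if_pos hz1, one_mul, Set.indicator_of_mem (hball_uT w hwf hz)]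
                · rw [Set.indicator_of_notMem hz]
                  exact zero_le
        have hmx : ENNReal.ofReal (m x) = ENNReal.ofReal (m x / (c₁ * (1 + t x) ^ ν)) *
            ENNReal.ofReal (c₁ * (1 + t x) ^ ν) := by
          rw [← ENNReal.ofReal_mul (div_nonneg (hmpos x).le (by positivity))]
          congr 1
          exact (div_mul_cancel₀ _ (by positivity)).symm
        have hΛc : Λ x * ENNReal.ofReal (c₁ * (1 + t x) ^ ν) =
            ENNReal.ofReal c₁ * ENNReal.ofReal ((1 + t x) ^ (-dd)) := by
          rw [hΛ]
          dsimp only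
          rw [← ENNReal.ofReal_mul (Real.rpow_nonneg h1tx.le _),
              ← ENNReal.ofReal_mul hc₁0.le]
          congr 1
          rw [show (1 + t x) ^ (-M') * (c₁ * (1 + t x) ^ ν) =
              c₁ * ((1 + t x) ^ (-M') * (1 + t x) ^ ν) from by ring,
            ← Real.rpow_add h1tx]
          congr 2
          rw [hM']
          ring
        calc Λ x * ENNReal.ofReal (m x) * V₂
            = (ENNReal.ofReal c₁ * ENNReal.ofReal ((1 + t x) ^ (-dd))) *
              (ENNReal.ofReal (m x / (c₁ * (1 + t x) ^ ν)) * V₂) := by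
              rw [hmx, ← hΛc]; ring
          _ ≤ (ENNReal.ofReal c₁ * ENNReal.ofReal ((1 + t x) ^ (-dd))) *
              ∫⁻ z, H x z := mul_le_mul_right hlow _
          _ = ENNReal.ofReal c₁ *
              (ENNReal.ofReal ((1 + t x) ^ (-dd)) * ∫⁻ z, H x z) := by ring
      have hWV : W * V₂ ≤ ENNReal.ofReal c₁ *
          ∫⁻ x, ENNReal.ofReal ((1 + t x) ^ (-dd)) * ∫⁻ z, H x z := by
        calc W * V₂ = ∫⁻ x, Λ x * ENNReal.ofReal (m x) * V₂ := by
              rw [hW, lintegral_mul_const' V₂ _ hV₂top]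
          _ ≤ ∫⁻ x, ENNReal.ofReal c₁ *
              (ENNReal.ofReal ((1 + t x) ^ (-dd)) * ∫⁻ z, H x z) := lintegral_mono hptwx
          _ = _ := lintegral_const_mul' _ _ ENNReal.ofReal_ne_top
      set G : EuclideanSpace ℝ (Fin d) → EuclideanSpace ℝ (Fin d) → ℝ≥0∞ :=
        fun x z => ENNReal.ofReal ((1 + t x) ^ (-dd)) * H x z with hG
      have hGmeas : Measurable (Function.uncurry G) := by
        rw [hG]
        show Measurable fun p : EuclideanSpace ℝ (Fin d) × EuclideanSpace ℝ (Fin d) =>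
          ENNReal.ofReal ((1 + t p.1) ^ (-dd)) * H p.1 p.2
        apply Measurable.mul
        · have : Measurable fun s : EuclideanSpace ℝ (Fin d) =>
              ENNReal.ofReal ((1 + t s) ^ (-dd)) := by fun_prop
          exact this.comp measurable_fst
        · exact hHmeas
      have hindfin : ∀ z, (unitThick Ω).indicator mlow z ≠ ⊤ := by
        intro z
        exact ne_top_of_le_ne_top ENNReal.ofReal_ne_top
          (le_trans (Set.indicator_le_self _ _ z) (hmlow_le z))
      have hinner2 : ∀ z, (∫⁻ x, G x z) ≤
          ENNReal.ofReal ((3:ℝ) ^ dd) * Kb * (unitThick Ω).indicator mlow z := by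
        intro z
        have hptw2 : ∀ x, G x z ≤ (ENNReal.ofReal ((3:ℝ) ^ dd) *
            ENNReal.ofReal ((1 + ‖x - z‖) ^ (-dd))) *
            (unitThick Ω).indicator mlow z := by
          intro x
          rw [hG, hH]
          dsimp only
          by_cases hdz : dist x z ≤ t x + 2
          · rw [if_pos hdz, one_mul]
            apply mul_le_mul_left
            rw [← ENNReal.ofReal_mul (by positivity)]
            apply ENNReal.ofReal_le_ofReal
            apply tb_rpow_inv (by linarith [ht0 x] : (0:ℝ) < 1 + t x)
              (by positivity : (0:ℝ) < 1 + ‖x - z‖) (by norm_num : (0:ℝ) < 3) hdd0.le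
            rw [← dist_eq_norm]
            linarith [ht0 x]
          · rw [if_neg hdz, zero_mul, mul_zero]
            exact zero_le
        calc (∫⁻ x, G x z) ≤ ∫⁻ x, (ENNReal.ofReal ((3:ℝ) ^ dd) *
              ENNReal.ofReal ((1 + ‖x - z‖) ^ (-dd))) *
              (unitThick Ω).indicator mlow z := lintegral_mono hptw2
          _ = (ENNReal.ofReal ((3:ℝ) ^ dd) *
              ∫⁻ x, ENNReal.ofReal ((1 + ‖x - z‖) ^ (-dd))) *
              (unitThick Ω).indicator mlow z := by
              rw [lintegral_mul_const' _ _ (hindfin z),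
                lintegral_const_mul' _ _ ENNReal.ofReal_ne_top]
          _ = _ := by rw [htrans z]
      have hS : (∫⁻ x, ENNReal.ofReal ((1 + t x) ^ (-dd)) * ∫⁻ z, H x z) ≤
          ENNReal.ofReal ((3:ℝ) ^ dd) * Kb * U := by
        have h1 : ∀ x, ENNReal.ofReal ((1 + t x) ^ (-dd)) * (∫⁻ z, H x z) =
            ∫⁻ z, G x z := by
          intro x
          rw [hG]
          exact (lintegral_const_mul' _ _ ENNReal.ofReal_ne_top).symm
        calc (∫⁻ x, ENNReal.ofReal ((1 + t x) ^ (-dd)) * ∫⁻ z, H x z)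
            = ∫⁻ x, ∫⁻ z, G x z := by
              congr 1
              funext x
              exact h1 x
          _ = ∫⁻ z, ∫⁻ x, G x z := lintegral_lintegral_swap hGmeas.aemeasurable
          _ ≤ ∫⁻ z, ENNReal.ofReal ((3:ℝ) ^ dd) * Kb *
              (unitThick Ω).indicator mlow z := lintegral_mono hinner2
          _ = ENNReal.ofReal ((3:ℝ) ^ dd) * Kb *
              ∫⁻ z, (unitThick Ω).indicator mlow z :=
              lintegral_const_mul' _ _
                (ENNReal.mul_ne_top ENNReal.ofReal_ne_top hKbtop.ne)
          _ ≤ ENNReal.ofReal ((3:ℝ) ^ dd) * Kb * U := by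
              apply mul_le_mul_right
              rw [lintegral_indicator huT_meas, hU]
              exact lintegral_mono (fun z => hmlow_le z)
      calc W * V₂ ≤ ENNReal.ofReal c₁ *
            ∫⁻ x, ENNReal.ofReal ((1 + t x) ^ (-dd)) * ∫⁻ z, H x z := hWV
        _ ≤ ENNReal.ofReal c₁ * (ENNReal.ofReal ((3:ℝ) ^ dd) * Kb * U) :=
            mul_le_mul_right hS _
        _ = (ENNReal.ofReal c₁ * ENNReal.ofReal ((3:ℝ) ^ dd) * Kb) * U := by ring
        _ ≤ E₅ * U := mul_le_mul_left (by rw [hE₅]; exact le_self_add) U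
  -- combine everything
  have hJU : J ≤ E₃ * U := by
    have h1 : J ≤ ENNReal.ofReal (2 ^ M') * ((ENNReal.ofReal c')⁻¹ * W) * Vr⁻¹ := by
      have h2 := (ENNReal.le_div_iff_mul_le (Or.inl hVr0) (Or.inl hVrtop)).mpr hJW
      rwa [div_eq_mul_inv] at h2
    have h2 : W ≤ E₅ * U * V₂⁻¹ := by
      have h3 := (ENNReal.le_div_iff_mul_le (Or.inl hV₂0) (Or.inl hV₂top)).mpr hWU
      rwa [div_eq_mul_inv] at h3
    calc J ≤ ENNReal.ofReal (2 ^ M') * ((ENNReal.ofReal c')⁻¹ * W) * Vr⁻¹ := h1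
      _ ≤ ENNReal.ofReal (2 ^ M') * ((ENNReal.ofReal c')⁻¹ * (E₅ * U * V₂⁻¹)) * Vr⁻¹ := by
          gcongr
      _ = E₃ * U := by rw [hE₃]; ring
  have hJ3 : Φc * J ≤ EE * U := by
    calc Φc * J ≤ Φc * (E₃ * U) := mul_le_mul_right hJU _
      _ = EE * U := by rw [hEE, hΦc]; ring
  by_cases hUtop : U = ⊤
  · rw [hUtop, ENNReal.mul_top hC0]
    exact le_top
  · have hΦJfin : Φc * J ≠ ⊤ :=
      ne_top_of_le_ne_top (ENNReal.mul_ne_top hEEtop hUtop) hJ3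
    have hIfin : IΩ ≠ ⊤ :=
      ne_top_of_le_ne_top (ENNReal.add_ne_top.mpr ⟨hNΩ.ne, hΦJfin⟩) hK6
    have hint_eq : (∫ x in Ω, mconv N (fun z => ρ z) x) = IΩ.toReal := by
      rw [hIΩ]
      simp only [hmconv]
      exact integral_toReal (hLmeas.aemeasurable.restrict)
        (Filter.Eventually.of_forall (fun x => hLfin x))
    have habs : |(N Ω).toReal - IΩ.toReal| ≤ (Φc * J).toReal := by
      rw [abs_sub_le_iff]
      constructor
      · have h := ENNReal.toReal_mono (ENNReal.add_ne_top.mpr ⟨hIfin, hΦJfin⟩) hK5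
        rw [ENNReal.toReal_add hIfin hΦJfin] at h
        linarith
      · have h := ENNReal.toReal_mono (ENNReal.add_ne_top.mpr ⟨hNΩ.ne, hΦJfin⟩) hK6
        rw [ENNReal.toReal_add hNΩ.ne hΦJfin] at h
        linarith
    rw [hint_eq]
    calc ENNReal.ofReal |(N Ω).toReal - IΩ.toReal| ≤
        ENNReal.ofReal ((Φc * J).toReal) := ENNReal.ofReal_le_ofReal habs
      _ = Φc * J := ENNReal.ofReal_toReal hΦJfin
      _ ≤ EE * U := hJ3
      _ ≤ ENNReal.ofReal (EE.toReal + 1) * U := mul_le_mul_left hCge U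

end
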